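/- Let T be a radially symmetric proper infinite rooted tree with radially symmetric weight σ, taking the value σ_k on every edge of the shell S_k. Then Mod_{1,σ}(Γ_∞) ≥ inf_{k≥1} σ_k·|S_k|. -/

import Mathlib

open scoped ENNReal NNReal

/-- A proper infinite rooted tree, modeled as a prefix-closed set of finite lists of
naturals in which every node has at least one and finitely many children. -/
structure PTree where
  mem : List ℕ → Prop
  root_mem : mem []
  prefix_closed : ∀ ⦃l₁ l₂ : List ℕ⦄, l₁ <+: l₂ → mem l₂ → mem l₁
  child_exists : ∀ ⦃l⦄, mem l → ∃ a, mem (l ++ [a])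
  finite_children : ∀ ⦃l⦄, mem l → {a : ℕ | mem (l ++ [a])}.Finite

/-- The initial segment of length `n` of `f : ℕ → ℕ`, as a list. -/
def seg (f : ℕ → ℕ) (n : ℕ) : List ℕ := (List.range n).map f

namespace PTree

variable (T : PTree)

/-- The edges of the tree: the nonempty lists in `T`. -/
def Edge : Type := {e : List ℕ // T.mem e ∧ e ≠ []}

/-- The family `Γ_∞` of infinite descending paths: functions all of whose
finite initial segments lie in `T`. -/
def GammaInf : Set (ℕ → ℕ) := {f | ∀ n, T.mem (seg f n)}

/-- `ρ`-length of the infinite descending path determined by `f`: the sum of `ρ`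
over the nonempty initial segments of `f`. -/
noncomputable def lenInf (ρ : List ℕ → ℝ≥0) (f : ℕ → ℕ) : ℝ≥0∞ :=
  ∑' n : ℕ, (ρ (seg f (n + 1)) : ℝ≥0∞)

/-- `ρ`-length of the finite descending path `γ_e` consisting of the nonempty
prefixes of the edge `e`. -/
noncomputable def lenFin (ρ : List ℕ → ℝ≥0) (e : List ℕ) : ℝ≥0∞ :=
  ∑ k ∈ Finset.range e.length, (ρ (e.take (k + 1)) : ℝ≥0∞)

/-- Admissible densities for the family `Γ_n` (identified with the shell `S_n`). -/
def AdmFin (n : ℕ) : Set (List ℕ → ℝ≥0) :=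
  {ρ | ∀ e : List ℕ, T.mem e → e.length = n → 1 ≤ lenFin ρ e}

/-- Admissible densities for the family `Γ_∞`. -/
def AdmInf : Set (List ℕ → ℝ≥0) :=
  {ρ | ∀ f ∈ T.GammaInf, 1 ≤ lenInf ρ f}

/-- The `p`-energy of a density `ρ` with respect to the weight `σ`. -/
noncomputable def energy (p : ℝ) (σ ρ : List ℕ → ℝ≥0) : ℝ≥0∞ :=
  ∑' e : T.Edge, (σ e.1 : ℝ≥0∞) * (ρ e.1 : ℝ≥0∞) ^ p

/-- The `∞`-energy of a density `ρ` with respect to the weight `σ`. -/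
noncomputable def energyTop (σ ρ : List ℕ → ℝ≥0) : ℝ≥0∞ :=
  ⨆ e : T.Edge, (σ e.1 : ℝ≥0∞) * (ρ e.1 : ℝ≥0∞)

/-- The `p`-modulus of the family `Γ_n`. -/
noncomputable def ModFin (p : ℝ) (σ : List ℕ → ℝ≥0) (n : ℕ) : ℝ≥0∞ :=
  ⨅ ρ ∈ T.AdmFin n, T.energy p σ ρ

/-- The `p`-modulus of the family `Γ_∞`. -/
noncomputable def ModInf (p : ℝ) (σ : List ℕ → ℝ≥0) : ℝ≥0∞ :=
  ⨅ ρ ∈ T.AdmInf, T.energy p σ ρ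

/-- The `∞`-modulus of the family `Γ_∞`. -/
noncomputable def ModTop (σ : List ℕ → ℝ≥0) : ℝ≥0∞ :=
  ⨅ ρ ∈ T.AdmInf, T.energyTop σ ρ

end PTree

namespace PTree

/-- A tree is radially symmetric if the number of children of an edge depends
only on its generation. -/
def RadiallySymmetric (T : PTree) : Prop :=
  ∀ ⦃e e' : List ℕ⦄, T.mem e → T.mem e' → e.length = e'.length →
    Nat.card {a : ℕ // T.mem (e ++ [a])} = Nat.card {a : ℕ // T.mem (e' ++ [a])}

end PTree

namespace Stmt8Aux

variable (T : PTree)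

def Dset (v : List ℕ) (m : ℕ) : Set (List ℕ) :=
  {e | T.mem e ∧ e.length = v.length + m ∧ v <+: e}

lemma shell_finite : ∀ n, {e : List ℕ | T.mem e ∧ e.length = n}.Finite := by
  intro n
  induction n with
  | zero =>
    apply Set.Finite.subset (Set.finite_singleton ([] : List ℕ))
    rintro e ⟨-, he⟩
    simp [List.length_eq_zero_iff.mp he]
  | succ n ih =>
    have hsub : {e : List ℕ | T.mem e ∧ e.length = n + 1} ⊆
        ⋃ v ∈ {e : List ℕ | T.mem e ∧ e.length = n},
          (fun a => v ++ [a]) '' {a | T.mem (v ++ [a])} := by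
      rintro e ⟨he, hlen⟩
      have hne : e ≠ [] := by intro h; simp [h] at hlen
      have hv : T.mem e.dropLast := T.prefix_closed (List.dropLast_prefix e) he
      have hvlen : e.dropLast.length = n := by
        simp [List.length_dropLast, hlen]
      refine Set.mem_biUnion (show e.dropLast ∈ {e : List ℕ | T.mem e ∧ e.length = n} from
        ⟨hv, hvlen⟩) ?_
      refine ⟨e.getLast hne, ?_, List.dropLast_append_getLast hne⟩
      simp only [Set.mem_setOf_eq, List.dropLast_append_getLast hne]
      exact he
    refine Set.Finite.subset (Set.Finite.biUnion ih ?_) hsub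
    rintro v ⟨hv, -⟩
    exact (T.finite_children hv).image _

lemma Dset_finite (v : List ℕ) (m : ℕ) : (Dset T v m).Finite :=
  (shell_finite T (v.length + m)).subset (fun _ he => ⟨he.1, he.2.1⟩)

noncomputable def DF (v : List ℕ) (m : ℕ) : Finset (List ℕ) :=
  (Dset_finite T v m).toFinset

lemma mem_DF {v e : List ℕ} {m : ℕ} :
    e ∈ DF T v m ↔ T.mem e ∧ e.length = v.length + m ∧ v <+: e := by
  simp [DF, Dset, Set.Finite.mem_toFinset]

lemma DF_zero {v : List ℕ} (hv : T.mem v) : DF T v 0 = {v} := by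
  ext e
  simp only [mem_DF, Finset.mem_singleton]
  constructor
  · rintro ⟨-, hlen, hpre⟩
    exact ((List.IsPrefix.eq_of_length hpre (by omega))).symm
  · rintro rfl
    exact ⟨hv, by simp, List.prefix_refl _⟩

lemma DF_succ (v : List ℕ) (m : ℕ) :
    DF T v (m + 1) = (DF T v 1).biUnion (fun c => DF T c m) := by
  ext e
  simp only [mem_DF, Finset.mem_biUnion]
  constructor
  · rintro ⟨he, hlen, hpre⟩
    refine ⟨e.take (v.length + 1), ⟨T.prefix_closed (List.take_prefix _ _) he, ?_, ?_⟩,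
      he, ?_, List.take_prefix _ _⟩
    · rw [List.length_take]; omega
    · exact List.prefix_of_prefix_length_le hpre (List.take_prefix _ _)
        (by rw [List.length_take]; omega)
    · rw [List.length_take]; omega
  · rintro ⟨c, ⟨hc, hclen, hvc⟩, he, helen, hce⟩
    exact ⟨he, by omega, hvc.trans hce⟩

lemma DF_one_pairwise (v : List ℕ) (m : ℕ) :
    ∀ c ∈ DF T v 1, ∀ c' ∈ DF T v 1, c ≠ c' → Disjoint (DF T c m) (DF T c' m) := by
  intro c hc c' hc' hne
  rw [Finset.disjoint_left]
  intro e he he'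
  apply hne
  have h1 := (mem_DF T).mp hc
  have h2 := (mem_DF T).mp hc'
  have h3 := (mem_DF T).mp he
  have h4 := (mem_DF T).mp he'
  have hcc' : c <+: c' := List.prefix_of_prefix_length_le h3.2.2 h4.2.2 (by omega)
  exact List.IsPrefix.eq_of_length hcc' (by omega)

lemma DF_nonempty : ∀ (m : ℕ) (v : List ℕ), T.mem v → (DF T v m).Nonempty := by
  intro m
  induction m with
  | zero => intro v hv; exact ⟨v, (mem_DF T).mpr ⟨hv, by simp, List.prefix_refl _⟩⟩
  | succ m ih =>
    intro v hv
    obtain ⟨a, ha⟩ := T.child_exists hv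
    have hc : v ++ [a] ∈ DF T v 1 := (mem_DF T).mpr ⟨ha, by simp, List.prefix_append _ _⟩
    obtain ⟨e, he⟩ := ih (v ++ [a]) ha
    exact ⟨e, by rw [DF_succ]; exact Finset.mem_biUnion.mpr ⟨_, hc, he⟩⟩

lemma card_DF_one {v : List ℕ} (hv : T.mem v) :
    (DF T v 1).card = Nat.card {a : ℕ // T.mem (v ++ [a])} := by
  have hinj : Function.Injective (fun a : ℕ => v ++ [a]) := by
    intro a b h; simpa using h
  have himg : (fun a : ℕ => v ++ [a]) '' {a | T.mem (v ++ [a])} = ↑(DF T v 1) := by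
    ext e
    simp only [Set.mem_image, Set.mem_setOf_eq, Finset.mem_coe, mem_DF]
    constructor
    · rintro ⟨a, ha, rfl⟩
      exact ⟨ha, by simp, List.prefix_append _ _⟩
    · rintro ⟨he, hlen, hpre⟩
      obtain ⟨t, rfl⟩ := hpre
      have ht : t.length = 1 := by
        rw [List.length_append] at hlen; omega
      obtain ⟨a, rfl⟩ := List.length_eq_one_iff.mp ht
      exact ⟨a, he, rfl⟩
  calc (DF T v 1).card = ((DF T v 1 : Finset (List ℕ)) : Set (List ℕ)).ncard :=
        (Set.ncard_coe_finset _).symm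
    _ = ({a | T.mem (v ++ [a])} : Set ℕ).ncard := by
        rw [← himg, Set.ncard_image_of_injective _ hinj]
    _ = Nat.card {a : ℕ // T.mem (v ++ [a])} := (Nat.card_coe_set_eq _).symm

lemma mem_of_mem_DF {v e : List ℕ} {m : ℕ} (h : e ∈ DF T v m) : T.mem e :=
  ((mem_DF T).mp h).1

lemma len_of_mem_DF {v e : List ℕ} {m : ℕ} (h : e ∈ DF T v m) :
    e.length = v.length + m := ((mem_DF T).mp h).2.1

variable {T} in
lemma Ncard_eq (hT : ∀ ⦃e e' : List ℕ⦄, T.mem e → T.mem e' → e.length = e'.length →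
      Nat.card {a : ℕ // T.mem (e ++ [a])} = Nat.card {a : ℕ // T.mem (e' ++ [a])}) :
    ∀ (m : ℕ) (v w : List ℕ), T.mem v → T.mem w → v.length = w.length →
      (DF T v m).card = (DF T w m).card := by
  intro m
  induction m with
  | zero => intro v w hv hw _; rw [DF_zero T hv, DF_zero T hw]; simp
  | succ m ih =>
    intro v w hv hw hlen
    obtain ⟨c0, hc0⟩ := DF_nonempty T 1 w hw
    have hc0m := mem_of_mem_DF T hc0
    have hc0l := len_of_mem_DF T hc0
    have hcard1 : (DF T v 1).card = (DF T w 1).card := by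
      rw [card_DF_one T hv, card_DF_one T hw]; exact hT hv hw hlen
    have hv1 : ∀ c ∈ DF T v 1, (DF T c m).card = (DF T c0 m).card := by
      intro c hc
      exact ih c c0 (mem_of_mem_DF T hc) hc0m (by rw [len_of_mem_DF T hc, hc0l, hlen])
    have hw1 : ∀ c ∈ DF T w 1, (DF T c m).card = (DF T c0 m).card := by
      intro c hc
      exact ih c c0 (mem_of_mem_DF T hc) hc0m (by rw [len_of_mem_DF T hc, hc0l])
    rw [DF_succ T v m, DF_succ T w m, Finset.card_biUnion (DF_one_pairwise T v m),
      Finset.card_biUnion (DF_one_pairwise T w m),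
      Finset.sum_congr rfl hv1, Finset.sum_congr rfl hw1,
      Finset.sum_const, Finset.sum_const, hcard1]

variable (ρ : List ℕ → ℝ≥0)

noncomputable def B (v : List ℕ) (m : ℕ) : ℝ≥0∞ :=
  ∑ e ∈ DF T v m, (ρ e : ℝ≥0∞)

noncomputable def W (v : List ℕ) : ℝ≥0∞ :=
  ∑' j : ℕ, B T ρ v (j + 1) / ((DF T v (j + 1)).card : ℝ≥0∞)

lemma B_succ (v : List ℕ) (m : ℕ) :
    B T ρ v (m + 1) = ∑ c ∈ DF T v 1, B T ρ c m := by
  rw [B, DF_succ T v m, Finset.sum_biUnion]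
  · rfl
  · intro c hc c' hc' hne
    exact DF_one_pairwise T v m c hc c' hc' hne

variable {T}

lemma sum_child_eq
    (hT : ∀ ⦃e e' : List ℕ⦄, T.mem e → T.mem e' → e.length = e'.length →
      Nat.card {a : ℕ // T.mem (e ++ [a])} = Nat.card {a : ℕ // T.mem (e' ++ [a])})
    (v : List ℕ) (hv : T.mem v) :
    ∑ c ∈ DF T v 1, ((ρ c : ℝ≥0∞) + W T ρ c)
      = ((DF T v 1).card : ℝ≥0∞) * W T ρ v := by
  obtain ⟨c0, hc0⟩ := DF_nonempty T 1 v hv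
  set K : ℝ≥0∞ := ((DF T v 1).card : ℝ≥0∞) with hK
  have hK0 : K ≠ 0 := by
    rw [hK]
    exact_mod_cast (Finset.card_pos.mpr ⟨c0, hc0⟩).ne'
  have hKt : K ≠ ∞ := ENNReal.natCast_ne_top _
  have hNc : ∀ c ∈ DF T v 1, ∀ j : ℕ, (DF T c j).card = (DF T c0 j).card := by
    intro c hc j
    exact Ncard_eq hT j c c0 (mem_of_mem_DF T hc) (mem_of_mem_DF T hc0)
      (by rw [len_of_mem_DF T hc, len_of_mem_DF T hc0])
  have hNsucc : ∀ j : ℕ,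
      ((DF T v (j + 2)).card : ℝ≥0∞) = K * ((DF T c0 (j + 1)).card : ℝ≥0∞) := by
    intro j
    rw [show j + 2 = (j + 1) + 1 from rfl, DF_succ T v (j + 1),
      Finset.card_biUnion (DF_one_pairwise T v (j + 1)),
      Finset.sum_congr rfl (fun c hc => hNc c hc (j + 1)), Finset.sum_const]
    rw [smul_eq_mul, Nat.cast_mul, hK]
  have key : ∀ j : ℕ,
      K * (B T ρ v (j + 2) / ((DF T v (j + 2)).card : ℝ≥0∞))
        = ∑ c ∈ DF T v 1, B T ρ c (j + 1) / ((DF T c (j + 1)).card : ℝ≥0∞) := by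
    intro j
    set n : ℝ≥0∞ := ((DF T c0 (j + 1)).card : ℝ≥0∞) with hn
    have h1 : K * (B T ρ v (j + 2) / (K * n)) = B T ρ v (j + 2) / n := by
      rw [div_eq_mul_inv, ENNReal.mul_inv (Or.inl hK0) (Or.inl hKt)]
      calc K * (B T ρ v (j + 2) * (K⁻¹ * n⁻¹))
          = (K * K⁻¹) * (B T ρ v (j + 2) * n⁻¹) := by ring
        _ = B T ρ v (j + 2) * n⁻¹ := by rw [ENNReal.mul_inv_cancel hK0 hKt, one_mul]
        _ = B T ρ v (j + 2) / n := (div_eq_mul_inv _ _).symm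
    rw [hNsucc j, h1]
    rw [show (B T ρ v (j + 2)) = ∑ c ∈ DF T v 1, B T ρ c (j + 1) from B_succ T ρ v (j+1)]
    rw [div_eq_mul_inv, Finset.sum_mul]
    refine Finset.sum_congr rfl fun c hc => ?_
    rw [hNc c hc (j + 1), ← hn, div_eq_mul_inv]
  have hswap : ∑' j : ℕ, ∑ c ∈ DF T v 1, B T ρ c (j + 1) / ((DF T c (j + 1)).card : ℝ≥0∞)
      = ∑ c ∈ DF T v 1, W T ρ c := by
    rw [Summable.tsum_finsetSum (fun i _ => ENNReal.summable)]
    rfl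
  calc ∑ c ∈ DF T v 1, ((ρ c : ℝ≥0∞) + W T ρ c)
      = B T ρ v 1 + ∑ c ∈ DF T v 1, W T ρ c := by
        rw [Finset.sum_add_distrib]; rfl
    _ = K * W T ρ v := by
        rw [W, ← ENNReal.tsum_mul_left,
          tsum_eq_zero_add' (f := fun j : ℕ =>
            K * (B T ρ v (j + 1) / ((DF T v (j + 1)).card : ℝ≥0∞))) ENNReal.summable]
        congr 1
        · rw [← hK, ENNReal.mul_div_cancel hK0 hKt]
        · rw [← hswap]
          exact tsum_congr fun j => (key j).symm

lemma exists_child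
    (hT : ∀ ⦃e e' : List ℕ⦄, T.mem e → T.mem e' → e.length = e'.length →
      Nat.card {a : ℕ // T.mem (e ++ [a])} = Nat.card {a : ℕ // T.mem (e' ++ [a])})
    (v : List ℕ) (hv : T.mem v) (hfin : W T ρ v ≠ ∞) :
    ∃ c ∈ DF T v 1, (ρ c : ℝ≥0∞) + W T ρ c ≤ W T ρ v := by
  by_contra hcon
  push_neg at hcon
  have hne : (DF T v 1).Nonempty := DF_nonempty T 1 v hv
  set t := (DF T v 1).inf' hne (fun c => (ρ c : ℝ≥0∞) + W T ρ c) with htdef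
  have h1 : W T ρ v < t := (Finset.lt_inf'_iff hne).mpr hcon
  set K : ℝ≥0∞ := ((DF T v 1).card : ℝ≥0∞) with hK
  have hK0 : K ≠ 0 := by
    rw [hK]
    exact_mod_cast (Finset.card_pos.mpr hne).ne'
  have hKt : K ≠ ∞ := ENNReal.natCast_ne_top _
  have h2 : K * t ≤ ∑ c ∈ DF T v 1, ((ρ c : ℝ≥0∞) + W T ρ c) := by
    calc K * t = ∑ _c ∈ DF T v 1, t := by rw [Finset.sum_const, nsmul_eq_mul]
      _ ≤ _ := Finset.sum_le_sum (fun c hc => Finset.inf'_le _ hc)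
  rw [sum_child_eq ρ hT v hv, ← hK] at h2
  exact absurd (lt_of_lt_of_le (ENNReal.mul_lt_mul_right hK0 hKt h1) h2) (lt_irrefl _)

variable (T)

open Classical in
noncomputable def nxt (v : List ℕ) : List ℕ :=
  if h : ∃ c ∈ DF T v 1, (ρ c : ℝ≥0∞) + W T ρ c ≤ W T ρ v then h.choose
  else if h' : ∃ a, T.mem (v ++ [a]) then v ++ [h'.choose] else v ++ [0]

noncomputable def nodes : ℕ → List ℕ
  | 0 => []
  | n + 1 => nxt T ρ (nodes n)

lemma nxt_mem {v : List ℕ} (hv : T.mem v) : T.mem (nxt T ρ v) := by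
  rw [nxt]
  split_ifs with h h'
  · exact mem_of_mem_DF T h.choose_spec.1
  · exact h'.choose_spec
  · exact absurd (T.child_exists hv) h'

lemma nxt_len (v : List ℕ) : (nxt T ρ v).length = v.length + 1 := by
  rw [nxt]
  split_ifs with h h'
  · exact len_of_mem_DF T h.choose_spec.1
  · simp
  · simp

lemma nxt_prefix (v : List ℕ) : v <+: nxt T ρ v := by
  rw [nxt]
  split_ifs with h h'
  · exact ((mem_DF T).mp h.choose_spec.1).2.2
  · exact List.prefix_append _ _
  · exact List.prefix_append _ _

lemma nodes_mem : ∀ n, T.mem (nodes T ρ n)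
  | 0 => T.root_mem
  | n + 1 => nxt_mem T ρ (nodes_mem n)

lemma nodes_len : ∀ n, (nodes T ρ n).length = n
  | 0 => rfl
  | n + 1 => by rw [nodes, nxt_len, nodes_len]

variable {T}

lemma invariant
    (hT : ∀ ⦃e e' : List ℕ⦄, T.mem e → T.mem e' → e.length = e'.length →
      Nat.card {a : ℕ // T.mem (e ++ [a])} = Nat.card {a : ℕ // T.mem (e' ++ [a])})
    (hfin : W T ρ [] ≠ ∞) :
    ∀ n : ℕ, (∑ k ∈ Finset.range n, (ρ (nodes T ρ (k + 1)) : ℝ≥0∞)) + W T ρ (nodes T ρ n)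
      ≤ W T ρ [] := by
  intro n
  induction n with
  | zero => simp [nodes]
  | succ n ih =>
    have hWle : W T ρ (nodes T ρ n) ≤ W T ρ [] := le_trans le_add_self ih
    have hWfin : W T ρ (nodes T ρ n) ≠ ∞ := by
      intro h
      exact hfin (top_le_iff.mp (h ▸ hWle))
    have hc : ∃ c ∈ DF T (nodes T ρ n) 1, (ρ c : ℝ≥0∞) + W T ρ c ≤ W T ρ (nodes T ρ n) :=
      exists_child ρ hT (nodes T ρ n) (nodes_mem T ρ n) hWfin
    have hnodes : nodes T ρ (n + 1) = hc.choose := by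
      show nxt T ρ (nodes T ρ n) = _
      rw [nxt, dif_pos hc]
    have hstep : (ρ (nodes T ρ (n + 1)) : ℝ≥0∞) + W T ρ (nodes T ρ (n + 1))
        ≤ W T ρ (nodes T ρ n) := by
      rw [hnodes]; exact hc.choose_spec.2
    calc (∑ k ∈ Finset.range (n + 1), (ρ (nodes T ρ (k + 1)) : ℝ≥0∞))
          + W T ρ (nodes T ρ (n + 1))
        = (∑ k ∈ Finset.range n, (ρ (nodes T ρ (k + 1)) : ℝ≥0∞))
            + ((ρ (nodes T ρ (n + 1)) : ℝ≥0∞) + W T ρ (nodes T ρ (n + 1))) := by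
          rw [Finset.sum_range_succ, add_assoc]
      _ ≤ (∑ k ∈ Finset.range n, (ρ (nodes T ρ (k + 1)) : ℝ≥0∞)) + W T ρ (nodes T ρ n) :=
          add_le_add_right hstep _
      _ ≤ W T ρ [] := ih

lemma seg_nodes (n : ℕ) :
    seg (fun j => (nodes T ρ (j + 1)).getD j 0) n = nodes T ρ n := by
  induction n with
  | zero => rfl
  | succ n ih =>
    obtain ⟨t, ht⟩ := nxt_prefix T ρ (nodes T ρ n)
    have ht' : nodes T ρ n ++ t = nodes T ρ (n + 1) := ht
    have htl : t.length = 1 := by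
      have := congrArg List.length ht'
      rw [List.length_append, nodes_len, nodes_len] at this
      omega
    obtain ⟨x, rfl⟩ := List.length_eq_one_iff.mp htl
    have hsome : (nodes T ρ (n + 1))[n]? = some x := by
      have h := List.getElem?_concat_length (l := nodes T ρ n) (a := x)
      rw [nodes_len] at h
      rw [← ht', h]
    have hget : (nodes T ρ (n + 1)).getD n 0 = x := by
      rw [List.getD_eq_getElem?_getD, hsome]
      rfl
    show (List.range (n + 1)).map _ = _
    rw [List.range_succ, List.map_append]
    have hih : (List.range n).map (fun j => (nodes T ρ (j + 1)).getD j 0) = nodes T ρ n := ih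
    rw [hih]
    simp only [List.map_cons, List.map_nil]
    rw [hget]
    exact ht'

lemma one_le_W
    (hT : ∀ ⦃e e' : List ℕ⦄, T.mem e → T.mem e' → e.length = e'.length →
      Nat.card {a : ℕ // T.mem (e ++ [a])} = Nat.card {a : ℕ // T.mem (e' ++ [a])})
    (hadm : ∀ f, (∀ n, T.mem (seg f n)) → 1 ≤ ∑' n : ℕ, (ρ (seg f (n + 1)) : ℝ≥0∞)) :
    1 ≤ W T ρ [] := by
  rcases eq_or_ne (W T ρ []) ∞ with h | hfin
  · rw [h]; exact le_top
  set f : ℕ → ℕ := fun j => (nodes T ρ (j + 1)).getD j 0 with hf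
  have hγ : ∀ n, T.mem (seg f n) := by
    intro n
    rw [show seg f n = nodes T ρ n from seg_nodes ρ n]
    exact nodes_mem T ρ n
  have hlen : (∑' n : ℕ, (ρ (seg f (n + 1)) : ℝ≥0∞)) ≤ W T ρ [] := by
    refine Summable.tsum_le_of_sum_le ENNReal.summable ?_
    intro s
    obtain ⟨N, hN⟩ := Finset.exists_nat_subset_range s
    calc ∑ n ∈ s, (ρ (seg f (n + 1)) : ℝ≥0∞)
        ≤ ∑ n ∈ Finset.range N, (ρ (seg f (n + 1)) : ℝ≥0∞) :=
          Finset.sum_le_sum_of_subset hN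
      _ = ∑ n ∈ Finset.range N, (ρ (nodes T ρ (n + 1)) : ℝ≥0∞) :=
          Finset.sum_congr rfl fun n _ => by rw [show seg f (n+1) = nodes T ρ (n+1) from seg_nodes ρ (n+1)]
      _ ≤ W T ρ [] := le_trans le_self_add (invariant ρ hT hfin N)
  exact le_trans (hadm f hγ) hlen

end Stmt8Aux

/-- for a radially symmetric tree with radially symmetric weight
(with value `σs k` on the shell `S_k`), `Mod_{1,σ}(Γ_∞) ≥ inf_{k ≥ 1} σs k * |S_k|`. -/
theorem stmt8 (T : PTree) (hT : T.RadiallySymmetric)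
    (σs : ℕ → ℝ≥0) (hσ : ∀ n, 0 < σs n) :
    (⨅ k : ℕ, (σs (k + 1) : ℝ≥0∞) *
        (Nat.card {e : List ℕ // T.mem e ∧ e.length = k + 1} : ℝ≥0∞))
      ≤ T.ModInf 1 (fun l => σs l.length) := by
  classical
  open Stmt8Aux in
  rw [PTree.ModInf]
  refine le_iInf₂ fun ρ hadm => ?_
  set I := ⨅ k : ℕ, (σs (k + 1) : ℝ≥0∞) *
      (Nat.card {e : List ℕ // T.mem e ∧ e.length = k + 1} : ℝ≥0∞) with hI
  have hcard : ∀ k : ℕ,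
      (Nat.card {e : List ℕ // T.mem e ∧ e.length = k + 1}) = (DF T [] (k + 1)).card := by
    intro k
    have hset : {e : List ℕ | T.mem e ∧ e.length = k + 1} = Dset T [] (k + 1) := by
      ext e
      simp [Dset, List.nil_prefix]
    calc Nat.card {e : List ℕ // T.mem e ∧ e.length = k + 1}
        = ({e : List ℕ | T.mem e ∧ e.length = k + 1}).ncard := Nat.card_coe_set_eq _
      _ = (Dset T [] (k + 1)).ncard := by rw [hset]
      _ = (DF T [] (k + 1)).card := Set.ncard_eq_toFinset_card _ (Dset_finite T [] (k + 1))
  have hW1 : (1 : ℝ≥0∞) ≤ W T ρ [] := one_le_W ρ hT (fun f hγ => hadm f hγ)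
  have hNpos : ∀ k : ℕ, ((DF T [] (k + 1)).card : ℝ≥0∞) ≠ 0 := fun k => by
    exact_mod_cast (Finset.card_pos.mpr (DF_nonempty T (k + 1) [] T.root_mem)).ne'
  have hNfin : ∀ k : ℕ, ((DF T [] (k + 1)).card : ℝ≥0∞) ≠ ∞ := fun k =>
    ENNReal.natCast_ne_top _
  have hinj : Function.Injective
      (fun p : (Σ k : ℕ, {x // x ∈ DF T [] (k + 1)}) =>
        (⟨p.2.1, mem_of_mem_DF T p.2.2, by
          have hl := len_of_mem_DF T p.2.2
          intro h
          rw [h] at hl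
          simp at hl⟩ : T.Edge)) := by
    rintro ⟨k, x⟩ ⟨k', y⟩ h
    have hval : x.1 = y.1 := congrArg (fun e : T.Edge => e.1) h
    have h1 := len_of_mem_DF T x.2
    have h2 := len_of_mem_DF T y.2
    rw [hval] at h1
    have hk : k = k' := by
      simp only [List.length_nil] at h1 h2
      omega
    subst hk
    exact congrArg (Sigma.mk k) (Subtype.ext hval)
  have hstep : ∀ k : ℕ, (σs (k + 1) : ℝ≥0∞) * B T ρ [] (k + 1)
      = ∑' x : {x // x ∈ DF T [] (k + 1)}, ((σs x.1.length : ℝ≥0∞) * (ρ x.1 : ℝ≥0∞)) := by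
    intro k
    calc (σs (k + 1) : ℝ≥0∞) * B T ρ [] (k + 1)
        = ∑ e ∈ DF T [] (k + 1), ((σs e.length : ℝ≥0∞) * (ρ e : ℝ≥0∞)) := by
          rw [B, Finset.mul_sum]
          refine Finset.sum_congr rfl fun e he => ?_
          rw [len_of_mem_DF T he]
          simp
      _ = ∑ x : {x // x ∈ DF T [] (k + 1)}, ((σs x.1.length : ℝ≥0∞) * (ρ x.1 : ℝ≥0∞)) :=
          (Finset.sum_coe_sort _ _).symm
      _ = ∑' x : {x // x ∈ DF T [] (k + 1)}, ((σs x.1.length : ℝ≥0∞) * (ρ x.1 : ℝ≥0∞)) :=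
          (tsum_fintype _).symm
  have hEn : (∑' k : ℕ, (σs (k + 1) : ℝ≥0∞) * B T ρ [] (k + 1))
      ≤ T.energy 1 (fun l => σs l.length) ρ := by
    calc ∑' k : ℕ, (σs (k + 1) : ℝ≥0∞) * B T ρ [] (k + 1)
        = ∑' k : ℕ, ∑' x : {x // x ∈ DF T [] (k + 1)},
            ((σs x.1.length : ℝ≥0∞) * (ρ x.1 : ℝ≥0∞)) := tsum_congr hstep
      _ = ∑' p : (Σ k : ℕ, {x // x ∈ DF T [] (k + 1)}),
            ((σs p.2.1.length : ℝ≥0∞) * (ρ p.2.1 : ℝ≥0∞)) :=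
          (ENNReal.tsum_sigma' (fun p : (Σ k : ℕ, {x // x ∈ DF T [] (k + 1)}) =>
            ((σs p.2.1.length : ℝ≥0∞) * (ρ p.2.1 : ℝ≥0∞)))).symm
      _ ≤ ∑' e : T.Edge, ((σs e.1.length : ℝ≥0∞) * (ρ e.1 : ℝ≥0∞)) :=
          ENNReal.tsum_comp_le_tsum_of_injective hinj
            (fun e => (σs e.1.length : ℝ≥0∞) * (ρ e.1 : ℝ≥0∞))
      _ = T.energy 1 (fun l => σs l.length) ρ := by
          rw [PTree.energy]
          exact tsum_congr fun e => by rw [ENNReal.rpow_one]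
  calc I = I * 1 := (mul_one I).symm
    _ ≤ I * W T ρ [] := mul_le_mul_right hW1 I
    _ = ∑' k : ℕ, I * (B T ρ [] (k + 1) / ((DF T [] (k + 1)).card : ℝ≥0∞)) := by
        rw [W, ENNReal.tsum_mul_left]
    _ ≤ ∑' k : ℕ, (σs (k + 1) : ℝ≥0∞) * B T ρ [] (k + 1) := by
        refine ENNReal.tsum_le_tsum fun k => ?_
        have h1 : I ≤ (σs (k + 1) : ℝ≥0∞) * ((DF T [] (k + 1)).card : ℝ≥0∞) := by
          rw [hI]
          refine iInf_le_of_le k ?_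
          rw [hcard k]
        calc I * (B T ρ [] (k + 1) / ((DF T [] (k + 1)).card : ℝ≥0∞))
            ≤ ((σs (k + 1) : ℝ≥0∞) * ((DF T [] (k + 1)).card : ℝ≥0∞))
                * (B T ρ [] (k + 1) / ((DF T [] (k + 1)).card : ℝ≥0∞)) :=
              mul_le_mul_left h1 _
          _ = (σs (k + 1) : ℝ≥0∞) * (((DF T [] (k + 1)).card : ℝ≥0∞)
                * (B T ρ [] (k + 1) / ((DF T [] (k + 1)).card : ℝ≥0∞))) := by ring
          _ = (σs (k + 1) : ℝ≥0∞) * B T ρ [] (k + 1) := by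
              rw [ENNReal.mul_div_cancel (hNpos k) (hNfin k)]
    _ ≤ T.energy 1 (fun l => σs l.length) ρ := hEn
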